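/- Let $E \subset \mathbb{C}$ be a bounded measurable set with finite perimeter, and let $G(z,w) = e^{z\bar{w}-|z|^2/2-|w|^2/2}$ be the Ginibre kernel. Then there is a universal constant $C$ such that $\int_E \int_{\mathbb{C}\setminus E} |G(z,w)|^2\,dA(z)\,dA(w) \le C \cdot \operatorname{perim} E$. -/

import Mathlib

open MeasureTheory

/-- `dA`: Lebesgue measure on `ℂ` divided by `π`. -/
noncomputable def dA : Measure ℂ := (ENNReal.ofReal Real.pi)⁻¹ • (volume : Measure ℂ)

/-- Admissible perimeter bounds for `E` (translation characterization of BV). -/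
def perimBounds (E : Set ℂ) : Set ℝ :=
  {P : ℝ | 0 ≤ P ∧ ∀ h : ℂ,
    ∫ z, |Set.indicator E (fun _ => (1 : ℝ)) (z + h) -
          Set.indicator E (fun _ => (1 : ℝ)) z| ∂dA ≤ P * ‖h‖}

/-- `E` has finite perimeter. -/
def HasFinitePerim (E : Set ℂ) : Prop := (perimBounds E).Nonempty

/-- The perimeter of `E` (total variation of `1_E`). -/
noncomputable def perim (E : Set ℂ) : ℝ := sInf (perimBounds E)

/-- The Ginibre kernel. -/
noncomputable def Ginibre (z w : ℂ) : ℂ :=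
  Complex.exp (z * (starRingEnd ℂ) w - (‖z‖ ^ 2 : ℝ) / 2 - (‖w‖ ^ 2 : ℝ) / 2)

open scoped ENNReal

lemma gauss_int (b : ℝ) (hb : 0 < b) : Integrable (fun v : ℂ => Real.exp (-b * ‖v‖^2)) := by
  have h := (GaussianFourier.integrable_cexp_neg_mul_sq_norm_add
      (b := (b:ℂ)) (by simpa using hb) 0 (0:ℂ)).norm
  simp only [zero_mul, add_zero, Complex.norm_exp,
    ← Complex.ofReal_pow, ← Complex.ofReal_neg, ← Complex.ofReal_mul, Complex.ofReal_re] at h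
  simpa using h

lemma cont_gauss : Continuous (fun v : ℂ => Real.exp (-‖v‖^2)) :=
  Real.continuous_exp.comp ((continuous_norm.pow 2).neg)

lemma gauss_mul_int : Integrable (fun v : ℂ => ‖v‖ * Real.exp (-‖v‖^2)) := by
  have hg := gauss_int (1/2) (by norm_num)
  refine hg.mono ?_ ?_
  · exact (continuous_norm.mul cont_gauss).aestronglyMeasurable
  · filter_upwards with v
    rw [Real.norm_eq_abs, Real.norm_eq_abs, abs_of_nonneg (by positivity),
      abs_of_nonneg (by positivity)]
    have h1 : ‖v‖ ≤ Real.exp (‖v‖^2/2) := by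
      nlinarith [Real.add_one_le_exp (‖v‖^2/2), sq_nonneg (‖v‖ - 1)]
    calc ‖v‖ * Real.exp (-‖v‖^2) ≤ Real.exp (‖v‖^2/2) * Real.exp (-‖v‖^2) := by
          exact mul_le_mul_of_nonneg_right h1 (Real.exp_nonneg _)
      _ = Real.exp (-(1/2) * ‖v‖^2) := by rw [← Real.exp_add]; ring_nf

lemma ginibre_norm_sq (z w : ℂ) : ‖Ginibre z w‖^2 = Real.exp (-‖z - w‖^2) := by
  unfold Ginibre
  rw [Complex.norm_exp, sq, ← Real.exp_add]
  congr 1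
  have h1 : ‖z - w‖^2 = Complex.normSq z + Complex.normSq w - 2 * (z * (starRingEnd ℂ) w).re := by
    rw [Complex.sq_norm, Complex.normSq_sub]
  have h2 : ‖z‖^2 = Complex.normSq z := by rw [Complex.sq_norm]
  have h3 : ‖w‖^2 = Complex.normSq w := by rw [Complex.sq_norm]
  have h4 : (z * (starRingEnd ℂ) w - ((‖z‖ ^ 2 : ℝ) : ℂ) / 2 - ((‖w‖ ^ 2 : ℝ) : ℂ) / 2)
      = z * (starRingEnd ℂ) w - (((‖z‖^2/2 + ‖w‖^2/2 : ℝ)) : ℂ) := by push_cast; ring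
  rw [h4, Complex.sub_re, Complex.ofReal_re]
  rw [h1, h2, h3]
  ring

noncomputable def Psi : ℂ → ℝ≥0∞ := fun u => ENNReal.ofReal (Real.exp (-‖u‖^2))

lemma measurable_Psi : Measurable Psi :=
  ENNReal.measurable_ofReal.comp cont_gauss.measurable

lemma Psi_ne_top (u : ℂ) : Psi u ≠ ⊤ := ENNReal.ofReal_ne_top

instance : SFinite dA := by unfold dA; infer_instance
instance : dA.IsAddRightInvariant := by unfold dA; infer_instance
instance : dA.IsAddLeftInvariant := by unfold dA; infer_instance

lemma pi_inv_ne_top : (ENNReal.ofReal Real.pi)⁻¹ ≠ ⊤ :=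
  ENNReal.inv_ne_top.2 (ENNReal.ofReal_pos.2 Real.pi_pos).ne'

lemma lintegral_dA_ne_top {f : ℂ → ℝ} (hf : Integrable f volume) :
    ∫⁻ u, ENNReal.ofReal (f u) ∂dA ≠ ⊤ := by
  unfold dA
  rw [lintegral_smul_measure]
  refine ENNReal.mul_ne_top pi_inv_ne_top ?_
  exact ((lintegral_ofReal_le_lintegral_enorm f).trans_lt hf.2).ne

lemma psi_lintegral_ne_top : ∫⁻ u, Psi u ∂dA ≠ ⊤ := by
  have := lintegral_dA_ne_top (f := fun v : ℂ => Real.exp (-‖v‖^2))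
    (by simpa using gauss_int 1 one_pos)
  simpa [Psi] using this

/-- Area law for the Ginibre kernel:
`∫_E ∫_{ℂ∖E} |G(z,w)|² dA(z) dA(w) ≤ C · perim E`. -/
theorem ginibre_area_law :
    ∃ C > (0 : ℝ), ∀ E : Set ℂ, MeasurableSet E → Bornology.IsBounded E →
      HasFinitePerim E →
      ∫ w in E, ∫ z in Eᶜ, ‖Ginibre z w‖ ^ 2 ∂dA ∂dA ≤ C * perim E := by
  set K : ℝ≥0∞ := ∫⁻ u, ENNReal.ofReal (‖u‖ * Real.exp (-‖u‖^2)) ∂dA with hKdef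
  have hK : K ≠ ⊤ := lintegral_dA_ne_top gauss_mul_int
  set C : ℝ := K.toReal + 1 with hCdef
  have hC0 : 0 < C := by positivity
  refine ⟨C, hC0, fun E hE hEb hEfp => ?_⟩
  -- real-valued indicator of E
  set indR : ℂ → ℝ := Set.indicator E (fun _ => (1 : ℝ)) with hindR
  have hindR_int : Integrable indR dA := by
    have hvol : Integrable indR volume := by
      rw [hindR, integrable_indicator_iff hE]
      exact integrableOn_const hEb.measure_lt_top.ne
    exact hvol.smul_measure pi_inv_ne_top
  -- ℝ≥0∞-valued indicators
  set indE : ℂ → ℝ≥0∞ := Set.indicator E (fun _ => (1:ℝ≥0∞)) with hindE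
  set indEc : ℂ → ℝ≥0∞ := Set.indicator Eᶜ (fun _ => (1:ℝ≥0∞)) with hindEc
  have hindE_meas : Measurable indE := measurable_const.indicator hE
  have hindEc_meas : Measurable indEc := measurable_const.indicator hE.compl
  -- the key quantitative bound, for any admissible perimeter bound P
  have key : ∀ P ∈ perimBounds E,
      ∫ w in E, ∫ z in Eᶜ, ‖Ginibre z w‖ ^ 2 ∂dA ∂dA ≤ C * P := by
    rintro P ⟨hP0, hP⟩
    -- the inner lintegral
    set I : ℂ → ℝ≥0∞ := fun w => ∫⁻ z in Eᶜ, Psi (z - w) ∂dA with hIdef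
    have hIle : ∀ w, I w ≤ ∫⁻ u, Psi u ∂dA := by
      intro w
      refine le_trans (setLIntegral_le_lintegral _ _) (le_of_eq ?_)
      have := lintegral_add_right_eq_self (μ := dA) (fun u => Psi u) (-w)
      simpa [sub_eq_add_neg] using this
    have hIne : ∀ w, I w ≠ ⊤ := fun w => ((hIle w).trans_lt
      (lt_top_iff_ne_top.2 psi_lintegral_ne_top)).ne
    -- step 1 : inner Bochner integral equals toReal of I
    have step1 : ∀ w, ∫ z in Eᶜ, ‖Ginibre z w‖ ^ 2 ∂dA = (I w).toReal := by
      intro w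
      have hco : Continuous (fun z : ℂ => Real.exp (-‖z - w‖^2)) :=
        cont_gauss.comp (continuous_id.sub continuous_const)
      rw [integral_congr_ae (Filter.Eventually.of_forall fun z => ginibre_norm_sq z w)]
      rw [integral_eq_lintegral_of_nonneg_ae
        (Filter.Eventually.of_forall fun z => (Real.exp_nonneg _))
        hco.aestronglyMeasurable]
      rfl
    -- step 2 : outer integral equals toReal of double lintegral
    have hImeas : Measurable I := by
      apply Measurable.lintegral_prod_right (f := fun w z => Psi (z - w))
      exact measurable_Psi.comp (measurable_snd.sub measurable_fst)
    have step2 : ∫ w in E, ∫ z in Eᶜ, ‖Ginibre z w‖ ^ 2 ∂dA ∂dA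
        = (∫⁻ w in E, I w ∂dA).toReal := by
      rw [integral_congr_ae (Filter.Eventually.of_forall step1)]
      rw [integral_eq_lintegral_of_nonneg_ae
        (Filter.Eventually.of_forall fun w => ENNReal.toReal_nonneg)
        (hImeas.ennreal_toReal.aestronglyMeasurable)]
      congr 1
      exact lintegral_congr fun w => ENNReal.ofReal_toReal (hIne w)
    -- step 3 : change of variables in the inner lintegral
    have step3 : ∀ w, I w = ∫⁻ u, indEc (w + u) * Psi u ∂dA := by
      intro w
      calc I w = ∫⁻ z, indEc z * Psi (z - w) ∂dA := by
            show (∫⁻ z in Eᶜ, Psi (z - w) ∂dA) = _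
            rw [← lintegral_indicator hE.compl]
            refine lintegral_congr fun z => ?_
            by_cases hz : z ∈ Eᶜ <;> simp [hindEc, hz]
        _ = ∫⁻ u, indEc (u + w) * Psi (u + w - w) ∂dA :=
            (lintegral_add_right_eq_self (fun z => indEc z * Psi (z - w)) w).symm
        _ = ∫⁻ u, indEc (w + u) * Psi u ∂dA := by
            refine lintegral_congr fun u => ?_
            rw [add_sub_cancel_right, add_comm u w]
    -- step 4 : double lintegral with indicators, swap order
    have hone_ne : ∀ w, indE w ≠ ⊤ := by
      intro w
      rw [hindE]
      by_cases hw : w ∈ E <;> simp [hw]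
    have step4 : ∫⁻ w in E, I w ∂dA
        = ∫⁻ u, ∫⁻ w, indE w * (indEc (w + u) * Psi u) ∂dA ∂dA := by
      rw [← lintegral_indicator hE]
      rw [← lintegral_lintegral_swap]
      · refine lintegral_congr fun w => ?_
        by_cases hw : w ∈ E
        · rw [Set.indicator_of_mem hw, step3 w]
          have h1 : indE w = 1 := by simp [hindE, hw]
          rw [h1]
          simp
        · rw [Set.indicator_of_notMem hw]
          rw [show indE w = 0 by simp [hindE, Set.indicator_of_notMem hw]]
          simp
      · apply Measurable.aemeasurable
        apply Measurable.mul
        · exact hindE_meas.comp measurable_fst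
        · exact ((hindEc_meas.comp (measurable_fst.add measurable_snd)).mul
            (measurable_Psi.comp measurable_snd))
    -- step 5 : bound the inner translation integral by the perimeter bound
    have step5 : ∀ u, ∫⁻ w, indE w * indEc (w + u) ∂dA ≤ ENNReal.ofReal (P * ‖u‖) := by
      intro u
      have hpt : ∀ w, indE w * indEc (w + u) ≤ ENNReal.ofReal |indR (w + u) - indR w| := by
        intro w
        by_cases hw : w ∈ E <;> by_cases hwu : w + u ∈ E <;>
          simp [hindE, hindEc, hindR, hw, hwu]
      refine le_trans (lintegral_mono hpt) ?_
      have htr : Integrable (fun w => indR (w + u)) dA := hindR_int.comp_add_right u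
      have habs : Integrable (fun w => |indR (w + u) - indR w|) dA := (htr.sub hindR_int).abs
      rw [← ofReal_integral_eq_lintegral_ofReal habs
        (Filter.Eventually.of_forall fun w => abs_nonneg _)]
      exact ENNReal.ofReal_le_ofReal (hP u)
    -- step 6 : put everything together
    have step6 : ∫⁻ w in E, I w ∂dA ≤ ENNReal.ofReal P * K := by
      rw [step4]
      calc ∫⁻ u, ∫⁻ w, indE w * (indEc (w + u) * Psi u) ∂dA ∂dA
          = ∫⁻ u, Psi u * ∫⁻ w, indE w * indEc (w + u) ∂dA ∂dA := by
            refine lintegral_congr fun u => ?_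
            rw [← lintegral_const_mul' (Psi u) _ (Psi_ne_top u)]
            refine lintegral_congr fun w => ?_
            ring
        _ ≤ ∫⁻ u, Psi u * ENNReal.ofReal (P * ‖u‖) ∂dA := by
            refine lintegral_mono fun u => ?_
            exact mul_le_mul_right (step5 u) _
        _ = ∫⁻ u, ENNReal.ofReal P * ENNReal.ofReal (‖u‖ * Real.exp (-‖u‖^2)) ∂dA := by
            refine lintegral_congr fun u => ?_
            rw [Psi, ← ENNReal.ofReal_mul (Real.exp_nonneg _),
              show Real.exp (-‖u‖^2) * (P * ‖u‖) = P * (‖u‖ * Real.exp (-‖u‖^2)) by ring,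
              ENNReal.ofReal_mul hP0]
        _ = ENNReal.ofReal P * K := by
            rw [hKdef, ← lintegral_const_mul' _ _ ENNReal.ofReal_ne_top]
    -- conclude
    rw [step2]
    have hfin : ENNReal.ofReal P * K ≠ ⊤ := ENNReal.mul_ne_top ENNReal.ofReal_ne_top hK
    refine le_trans (ENNReal.toReal_mono hfin step6) ?_
    rw [ENNReal.toReal_mul, ENNReal.toReal_ofReal hP0]
    nlinarith [ENNReal.toReal_nonneg (a := K)]
  -- conclude using the infimum
  have hLHS0 : ∀ P ∈ perimBounds E,
      (∫ w in E, ∫ z in Eᶜ, ‖Ginibre z w‖ ^ 2 ∂dA ∂dA) / C ≤ P := by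
    intro P hP
    rw [div_le_iff₀ hC0, mul_comm]
    exact key P hP
  have h2 := le_csInf hEfp hLHS0
  rw [div_le_iff₀ hC0, mul_comm] at h2
  exact h2
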